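/- Let G be a graph and let r,s be rays in G. Then r ∼_E s in G if and only if φ(r) ∼ φ(s) in the line graph G′. Consequently, the map Φ : Ω_E(G) → Ω(G′) given by Φ([r]_E) = [φ(r)] is a well-defined injection. -/

import Mathlib

/-!
Formalization of definitions and a statement from
"Edge-connectivity and edge-ends in infinite graphs" (arXiv:2404.17106).
-/

universe u

namespace EdgeEndPaper

variable {V : Type u}

/-- A ray in `G`: a one-way infinite path `v₀v₁v₂…`. -/
structure Ray (G : SimpleGraph V) : Type u where
  f : ℕ → V
  inj : Function.Injective f
  adj : ∀ n : ℕ, G.Adj (f n) (f (n + 1))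

/-- A double ray in `G`: a two-way infinite path. -/
structure DoubleRay (G : SimpleGraph V) : Type u where
  f : ℤ → V
  inj : Function.Injective f
  adj : ∀ n : ℤ, G.Adj (f n) (f (n + 1))

variable (G : SimpleGraph V)

/-- The tails of the rays `r` and `s` lie in the same connected component of `G - F`
(deletion of the edges in `F`). -/
def SameComp (F : Set (Sym2 V)) (r s : Ray G) : Prop :=
  ∃ N : ℕ, ∀ m n : ℕ, N ≤ m → N ≤ n → (G.deleteEdges F).Reachable (r.f m) (s.f n)

/-- Edge-equivalence of rays: no finite edge set separates the tails of `r` and `s`. -/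
def EdgeEquiv (r s : Ray G) : Prop :=
  ∀ F : Set (Sym2 V), F.Finite → SameComp G F r s

/-- The edge-end space `Ω_E(G)`. -/
def EdgeEnd : Type u := Quot (EdgeEquiv G)

/-- The edge-end `[r]_E` of a ray `r`. -/
def Ray.edgeEnd {G : SimpleGraph V} (r : Ray G) : EdgeEnd G := Quot.mk _ r

/-- `C_E(F, ω)` : the vertices of the connected component of `G - F` in which `ω` has a tail. -/
def CE (F : Set (Sym2 V)) (ω : EdgeEnd G) : Set V :=
  {v | ∃ r : Ray G, r.edgeEnd = ω ∧ ∃ N : ℕ, ∀ n : ℕ, N ≤ n →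
    (G.deleteEdges F).Reachable (r.f n) v}

/-- `Ω_E(F, ω)` : the edge-ends whose rays have tails in the same component of `G - F`
as the rays of `ω`. -/
def OmegaE (F : Set (Sym2 V)) (ω : EdgeEnd G) : Set (EdgeEnd G) :=
  {η | ∃ r s : Ray G, r.edgeEnd = ω ∧ s.edgeEnd = η ∧ SameComp G F r s}

/-- The topology on `Ω_E(G)`, with the sets `Ω_E(F, ω)` (for finite `F ⊆ E(G)`) as a basis. -/
def edgeEndTopology : TopologicalSpace (EdgeEnd G) :=
  .generateFrom {U | ∃ (F : Set (Sym2 V)) (ω : EdgeEnd G),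
    F.Finite ∧ F ⊆ G.edgeSet ∧ U = OmegaE G F ω}

/-- `Ê(F, ω) = C_E(F, ω) ∪ Ω_E(F, ω)`, inside `Ê(G) = V(G) ⊔ Ω_E(G)`. -/
def EHatBasic (F : Set (Sym2 V)) (ω : EdgeEnd G) : Set (V ⊕ EdgeEnd G) :=
  Sum.inl '' CE G F ω ∪ Sum.inr '' OmegaE G F ω

/-- The topology on `Ê(G) = V(G) ∪ Ω_E(G)`: the vertex singletons together with the sets
`Ê(F, ω)` (for finite `F ⊆ E(G)`) form a basis. -/
def eHatTopology : TopologicalSpace (V ⊕ EdgeEnd G) :=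
  .generateFrom ({U | ∃ v : V, U = {Sum.inl v}} ∪
    {U | ∃ (F : Set (Sym2 V)) (ω : EdgeEnd G),
      F.Finite ∧ F ⊆ G.edgeSet ∧ U = EHatBasic G F ω})

/-- A vertex `v` edge-dominates the edge-end `ω` if `v ∈ C_E(F, ω)` for every finite `F`. -/
def EdgeDominates (v : V) (ω : EdgeEnd G) : Prop :=
  ∀ F : Set (Sym2 V), F.Finite → v ∈ CE G F ω

/-- The cut `δ(X)`: the edges of `G` with one endpoint in `X` and the other outside of `X`. -/
def cut (X : Set V) : Set (Sym2 V) :=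
  {e | e ∈ G.edgeSet ∧ ∃ u v : V, e = s(u, v) ∧ u ∈ X ∧ v ∉ X}

/-- `u` and `v` are connected in `G` by a walk avoiding the vertex set `S`. -/
def ReachAvoid (S : Set V) (u v : V) : Prop :=
  ∃ p : G.Walk u v, ∀ w ∈ p.support, w ∉ S

/-- The tails of `r` and `s` lie in the same component of `G - S` (vertex deletion). -/
def VSameComp (S : Set V) (r s : Ray G) : Prop :=
  ∃ N : ℕ, ∀ m n : ℕ, N ≤ m → N ≤ n → ReachAvoid G S (r.f m) (s.f n)

/-- Equivalence of rays: no finite vertex set separates the tails of `r` and `s`. -/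
def VEquiv (r s : Ray G) : Prop :=
  ∀ S : Set V, S.Finite → VSameComp G S r s

/-- The end space `Ω(G)`. -/
def VEnd : Type u := Quot (VEquiv G)

/-- The end `[r]` of a ray `r`. -/
def Ray.vEnd {G : SimpleGraph V} (r : Ray G) : VEnd G := Quot.mk _ r

/-- `C(S, ω)` : the vertices of the component of `G - S` in which `ω` has a tail. -/
def CV (S : Set V) (ω : VEnd G) : Set V :=
  {v | ∃ r : Ray G, r.vEnd = ω ∧ ∃ N : ℕ, ∀ n : ℕ, N ≤ n → ReachAvoid G S (r.f n) v}

/-- `Ω(S, ω)` : the ends whose rays have tails in the same component of `G - S` as `ω`. -/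
def OmegaV (S : Set V) (ω : VEnd G) : Set (VEnd G) :=
  {η | ∃ r s : Ray G, r.vEnd = ω ∧ s.vEnd = η ∧ VSameComp G S r s}

/-- `V̂(S, ω) = C(S, ω) ∪ Ω(S, ω)`. -/
def VHatBasic (S : Set V) (ω : VEnd G) : Set (V ⊕ VEnd G) :=
  Sum.inl '' CV G S ω ∪ Sum.inr '' OmegaV G S ω

/-- The topology on `V̂(G) = V(G) ∪ Ω(G)`: the finite vertex sets and the sets `V̂(S, ω)`
form a basis of open sets. -/
def vHatTopology : TopologicalSpace (V ⊕ VEnd G) :=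
  .generateFrom ({U | ∃ A : Set V, A.Finite ∧ U = Sum.inl '' A} ∪
    {U | ∃ (S : Set V) (ω : VEnd G), S.Finite ∧ U = VHatBasic G S ω})

/-- The topology on the end space `Ω(G)`, with the sets `Ω(S, ω)` as a basis. -/
def endTopology : TopologicalSpace (VEnd G) :=
  .generateFrom {U | ∃ (S : Set V) (ω : VEnd G), S.Finite ∧ U = OmegaV G S ω}

/-- `C` is (the vertex set of) a connected component of the graph obtained from `G` by
deleting the vertex set `S`. -/
def CompAvoiding (S : Set V) (C : Set V) : Prop :=
  ∃ v : V, v ∉ S ∧ C = {u | ReachAvoid G S v u}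

/-- The ray `φ(r)` in the line graph of `G` induced by a ray `r` of `G`: its vertices are
the consecutive edges of `r`. -/
def phiRay {G : SimpleGraph V} (r : Ray G) : Ray G.lineGraph where
  f n := ⟨s(r.f n, r.f (n + 1)), G.mem_edgeSet.mpr (r.adj n)⟩
  inj a b h := by
    have h' : s(r.f a, r.f (a + 1)) = s(r.f b, r.f (b + 1)) := congrArg Subtype.val h
    rcases Sym2.eq_iff.mp h' with ⟨h1, _⟩ | ⟨h1, h2⟩
    · exact r.inj h1
    · have e1 := r.inj h1
      have e2 := r.inj h2
      omega
  adj n := by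
    refine SimpleGraph.lineGraph_adj_iff_exists.mpr ⟨?_, r.f (n + 1), ?_, ?_⟩
    · intro h
      have h' : s(r.f n, r.f (n + 1)) = s(r.f (n + 1), r.f (n + 2)) :=
        congrArg Subtype.val h
      rcases Sym2.eq_iff.mp h' with ⟨h1, _⟩ | ⟨h1, _⟩
      · have := r.inj h1; omega
      · have := r.inj h1; omega
    · exact Sym2.mem_iff.mpr (Or.inr rfl)
    · exact Sym2.mem_iff.mpr (Or.inl rfl)


/-- For an injective sequence and a finite set, the sequence is eventually outside the set. -/
lemma eventually_not_mem {α : Type*} {g : ℕ → α} (hg : Function.Injective g)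
    {F : Set α} (hF : F.Finite) : ∃ N : ℕ, ∀ n, N ≤ n → g n ∉ F := by
  have hfin : (g ⁻¹' F).Finite := hF.preimage hg.injOn
  obtain ⟨M, hM⟩ := hfin.bddAbove
  exact ⟨M + 1, fun n hn hmem => by have := hM hmem; omega⟩

variable {G}

/-- The edges of a ray form an injective sequence. -/
lemma ray_edge_inj (r : Ray G) :
    Function.Injective (fun n => s(r.f n, r.f (n + 1))) := by
  intro a b h'
  rcases Sym2.eq_iff.mp h' with ⟨h1, _⟩ | ⟨h1, h2⟩
  · exact r.inj h1
  · have e1 := r.inj h1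
    have e2 := r.inj h2
    omega

/-- A walk along a segment of a ray. -/
lemma ray_segment (r : Ray G) (m n : ℕ) (hmn : m ≤ n) :
    ∃ p : G.Walk (r.f m) (r.f n), ∀ w ∈ p.support, ∃ i, m ≤ i ∧ w = r.f i := by
  induction n, hmn using Nat.le_induction with
  | base => exact ⟨SimpleGraph.Walk.nil, fun w hw => ⟨m, le_refl m, by simpa using hw⟩⟩
  | succ n hmn ih =>
    obtain ⟨p, hp⟩ := ih
    refine ⟨p.concat (r.adj n), fun w hw => ?_⟩
    rw [SimpleGraph.Walk.support_concat, List.mem_append] at hw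
    rcases hw with h | h
    · exact hp w h
    · exact ⟨n + 1, by omega, by simpa using h⟩

lemma reachAvoid_symm {S : Set V} {u v : V} (h : ReachAvoid G S u v) :
    ReachAvoid G S v u := by
  obtain ⟨p, hp⟩ := h
  exact ⟨p.reverse, fun w hw => hp w (by
    rwa [SimpleGraph.Walk.support_reverse, List.mem_reverse] at hw)⟩

lemma reachAvoid_trans {S : Set V} {u v w : V} (h1 : ReachAvoid G S u v)
    (h2 : ReachAvoid G S v w) : ReachAvoid G S u w := by
  obtain ⟨p, hp⟩ := h1
  obtain ⟨q, hq⟩ := h2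
  refine ⟨p.append q, fun x hx => ?_⟩
  rcases (SimpleGraph.Walk.mem_support_append_iff _ _).mp hx with h | h
  · exact hp x h
  · exact hq x h

lemma ray_reachAvoid (r : Ray G) {S : Set V} (hS : S.Finite) :
    ∃ N : ℕ, ∀ m n, N ≤ m → N ≤ n → ReachAvoid G S (r.f m) (r.f n) := by
  obtain ⟨N, hN⟩ := eventually_not_mem r.inj hS
  have key : ∀ m n, N ≤ m → m ≤ n → ReachAvoid G S (r.f m) (r.f n) := by
    intro m n hm hmn
    obtain ⟨p, hp⟩ := ray_segment r m n hmn
    refine ⟨p, fun w hw => ?_⟩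
    obtain ⟨i, hi, rfl⟩ := hp w hw
    exact hN i (le_trans hm hi)
  refine ⟨N, fun m n hm hn => ?_⟩
  rcases le_total m n with h | h
  · exact key m n hm h
  · exact reachAvoid_symm (key n m hn h)

lemma vEquiv_equivalence (G : SimpleGraph V) : Equivalence (VEquiv G) := by
  constructor
  · intro r S hS
    exact ray_reachAvoid r hS
  · intro r s h S hS
    obtain ⟨N, hN⟩ := h S hS
    exact ⟨N, fun m n hm hn => reachAvoid_symm (hN n m hn hm)⟩
  · intro r s t h1 h2 S hS
    obtain ⟨N1, hN1⟩ := h1 S hS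
    obtain ⟨N2, hN2⟩ := h2 S hS
    refine ⟨max N1 N2, fun m n hm hn => ?_⟩
    exact reachAvoid_trans
      (hN1 m (max N1 N2) (le_trans (le_max_left _ _) hm) (le_max_left _ _))
      (hN2 (max N1 N2) n (le_max_right _ _) (le_trans (le_max_right _ _) hn))

/-- Within a single edge not in `F`, both endpoints are reachable in `G - F`. -/
lemma reach_within_edge {F : Set (Sym2 V)} {e : Sym2 V} (he : e ∈ G.edgeSet)
    (heF : e ∉ F) {u v : V} (hu : u ∈ e) (hv : v ∈ e) :
    (G.deleteEdges F).Reachable u v := by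
  induction e with
  | _ a b =>
    by_cases huv : u = v
    · exact huv ▸ SimpleGraph.Reachable.refl u
    · have hadj : (G.deleteEdges F).Adj u v := by
        rw [SimpleGraph.deleteEdges_adj]
        rcases Sym2.mem_iff.mp hu with rfl | rfl <;>
          rcases Sym2.mem_iff.mp hv with rfl | rfl
        · exact absurd rfl huv
        · exact ⟨G.mem_edgeSet.mp he, heF⟩
        · refine ⟨(G.mem_edgeSet.mp he).symm, ?_⟩
          rwa [Sym2.eq_swap]
        · exact absurd rfl huv
      exact hadj.reachable

/-- Lemma A: a walk in `G - F` lifts to a walk in the line graph avoiding edges in `F`. -/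
lemma walk_to_lineGraph {F : Set (Sym2 V)} {u v : V} (p : (G.deleteEdges F).Walk u v) :
    ∀ (e f : G.edgeSet), (e : Sym2 V) ∉ F → (f : Sym2 V) ∉ F →
    u ∈ (e : Sym2 V) → v ∈ (f : Sym2 V) →
    ∃ q : G.lineGraph.Walk e f, ∀ x ∈ q.support, (x : Sym2 V) ∉ F := by
  induction p with
  | nil =>
    intro e f heF hfF hu hv
    by_cases hef : e = f
    · subst hef
      exact ⟨SimpleGraph.Walk.nil, fun x hx => by
        simp only [SimpleGraph.Walk.support_nil, List.mem_singleton] at hx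
        subst hx; exact heF⟩
    · have hadj : G.lineGraph.Adj e f :=
        SimpleGraph.lineGraph_adj_iff_exists.mpr ⟨hef, _, hu, hv⟩
      refine ⟨SimpleGraph.Walk.cons hadj SimpleGraph.Walk.nil, fun x hx => ?_⟩
      simp only [SimpleGraph.Walk.support_cons, SimpleGraph.Walk.support_nil,
        List.mem_cons, List.mem_singleton] at hx
      rcases hx with rfl | rfl | h
      · exact heF
      · exact hfF
      · exact absurd h List.not_mem_nil
  | @cons a b c hab q ih =>
    intro e f heF hfF hu hv
    have hmem : s(a, b) ∈ G.edgeSet := G.mem_edgeSet.mpr (SimpleGraph.deleteEdges_adj.mp hab).1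
    have hgF : s(a, b) ∉ F := (SimpleGraph.deleteEdges_adj.mp hab).2
    set g : G.edgeSet := ⟨s(a, b), hmem⟩ with hg
    have hb : b ∈ (g : Sym2 V) := Sym2.mem_iff.mpr (Or.inr rfl)
    obtain ⟨q', hq'⟩ := ih g f hgF hfF hb hv
    by_cases heg : e = g
    · subst heg
      exact ⟨q', hq'⟩
    · have ha : a ∈ (g : Sym2 V) := Sym2.mem_iff.mpr (Or.inl rfl)
      have hadj : G.lineGraph.Adj e g :=
        SimpleGraph.lineGraph_adj_iff_exists.mpr ⟨heg, a, hu, ha⟩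
      refine ⟨SimpleGraph.Walk.cons hadj q', fun x hx => ?_⟩
      rw [SimpleGraph.Walk.support_cons] at hx
      rcases List.mem_cons.mp hx with rfl | hx
      · exact heF
      · exact hq' x hx

/-- Lemma B: a walk in the line graph avoiding `F`-edges projects to reachability in `G - F`. -/
lemma lineGraph_to_walk {F : Set (Sym2 V)} {e f : G.edgeSet}
    (q : G.lineGraph.Walk e f) :
    (∀ x ∈ q.support, (x : Sym2 V) ∉ F) →
    ∀ u ∈ (e : Sym2 V), ∀ v ∈ (f : Sym2 V), (G.deleteEdges F).Reachable u v := by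
  induction q with
  | nil =>
    intro hq u hu v hv
    exact reach_within_edge (Subtype.prop _) (hq _ (by simp)) hu hv
  | @cons e g f heg q ih =>
    intro hq u hu v hv
    obtain ⟨-, w, hwe, hwg⟩ := SimpleGraph.lineGraph_adj_iff_exists.mp heg
    have heF : (e : Sym2 V) ∉ F := hq e (by simp)
    have hrest : ∀ x ∈ q.support, (x : Sym2 V) ∉ F := fun x hx =>
      hq x (by rw [SimpleGraph.Walk.support_cons]; exact List.mem_cons_of_mem _ hx)
    exact (reach_within_edge e.2 heF hu hwe).trans (ih hrest w hwg v hv)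

variable (G)

/-- Two rays of `G` are edge-equivalent iff the induced rays `φ(r)`, `φ(s)` of the line
graph are (vertex-)equivalent; consequently `Φ : Ω_E(G) → Ω(G')`, `[r]_E ↦ [φ(r)]`, is a
well-defined injection. -/
theorem edgeEquiv_iff_lineGraph_equiv :
    (∀ r s : Ray G, EdgeEquiv G r s ↔ VEquiv G.lineGraph (phiRay r) (phiRay s)) ∧
    ∃ Φ : EdgeEnd G → VEnd G.lineGraph,
      (∀ r : Ray G, Φ r.edgeEnd = (phiRay r).vEnd) ∧ Function.Injective Φ := by
  have fwd : ∀ r s : Ray G, EdgeEquiv G r s → VEquiv G.lineGraph (phiRay r) (phiRay s) := by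
    intro r s h S hS
    have hF : (Subtype.val '' S : Set (Sym2 V)).Finite := hS.image _
    obtain ⟨N, hN⟩ := h _ hF
    obtain ⟨Nr, hNr⟩ := eventually_not_mem (ray_edge_inj r) hF
    obtain ⟨Ns, hNs⟩ := eventually_not_mem (ray_edge_inj s) hF
    refine ⟨max N (max Nr Ns), fun m n hm hn => ?_⟩
    obtain ⟨p⟩ := hN m n (le_trans (le_max_left _ _) hm) (le_trans (le_max_left _ _) hn)
    obtain ⟨q, hq⟩ := walk_to_lineGraph p ((phiRay r).f m) ((phiRay s).f n)
      (hNr m (le_trans (le_trans (le_max_left _ _) (le_max_right _ _)) hm))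
      (hNs n (le_trans (le_trans (le_max_right _ _) (le_max_right _ _)) hn))
      (Sym2.mem_iff.mpr (Or.inl rfl)) (Sym2.mem_iff.mpr (Or.inl rfl))
    exact ⟨q, fun x hx hxS => hq x hx ⟨x, hxS, rfl⟩⟩
  have bwd : ∀ r s : Ray G, VEquiv G.lineGraph (phiRay r) (phiRay s) → EdgeEquiv G r s := by
    intro r s h F hF
    have hS : {e : G.edgeSet | (e : Sym2 V) ∈ F}.Finite :=
      hF.preimage Subtype.val_injective.injOn
    obtain ⟨N, hN⟩ := h _ hS
    refine ⟨N, fun m n hm hn => ?_⟩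
    obtain ⟨q, hq⟩ := hN m n hm hn
    exact lineGraph_to_walk q (fun x hx => hq x hx)
      _ (Sym2.mem_iff.mpr (Or.inl rfl)) _ (Sym2.mem_iff.mpr (Or.inl rfl))
  refine ⟨fun r s => ⟨fwd r s, bwd r s⟩, ?_⟩
  refine ⟨Quot.lift (fun r => (phiRay r).vEnd)
    (fun r s h => Quot.sound (fwd r s h)), fun r => rfl, ?_⟩
  intro ω₁ ω₂ h
  induction ω₁ using Quot.ind with | _ r =>
  induction ω₂ using Quot.ind with | _ s =>
  have : (phiRay r).vEnd = (phiRay s).vEnd := h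
  have hv : VEquiv G.lineGraph (phiRay r) (phiRay s) :=
    ((vEquiv_equivalence G.lineGraph).eqvGen_iff).mp (Quot.eqvGen_exact this)
  exact Quot.sound (bwd r s hv)

end EdgeEndPaper
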